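/- Let G be a finite simple graph with vertex set V, let k be a positive integer, let T ⊆ V satisfy |Γ_T(Z)| ≥ k − 1 for every Steiner T-cut Z, and fix r ∈ T. Let M be the family of min-cores of the family D of demand cuts (Steiner (T,r)-cuts X with |Γ_T(X)| = k − 1). If M' ⊆ M is such that every pair of distinct min-cores in M' is independent, then ⋃_{Z ∈ M'} C(Z) is uncrossable. -/

import Mathlib

/-- `nbr G X` is Γ(X): the set of vertices outside `X` adjacent to a vertex of `X`. -/
def nbr {V : Type*} [Fintype V] [DecidableEq V] (G : SimpleGraph V) [DecidableRel G.Adj]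
    (X : Finset V) : Finset V :=
  Finset.univ.filter (fun v => v ∉ X ∧ ∃ u ∈ X, G.Adj u v)

/-- `cl G X` is X⁺ = X ∪ Γ(X). -/
def cl {V : Type*} [Fintype V] [DecidableEq V] (G : SimpleGraph V) [DecidableRel G.Adj]
    (X : Finset V) : Finset V :=
  X ∪ nbr G X

/-- A demand cut: a Steiner (T,r)-cut X with |Γ_T(X)| = k - 1. -/
def IsDemand {V : Type*} [Fintype V] [DecidableEq V] (G : SimpleGraph V) [DecidableRel G.Adj]
    (T : Finset V) (k : ℕ) (r : V) (X : Finset V) : Prop :=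
  (X ∩ T).Nonempty ∧ (T \ cl G X).Nonempty ∧ r ∉ cl G X ∧ (nbr G X ∩ T).card = k - 1

/-- A min-core: a minimal demand cut. -/
def IsMinCore {V : Type*} [Fintype V] [DecidableEq V] (G : SimpleGraph V) [DecidableRel G.Adj]
    (T : Finset V) (k : ℕ) (r : V) (X : Finset V) : Prop :=
  IsDemand G T k r X ∧ ∀ Y : Finset V, IsDemand G T k r Y → Y ⊆ X → Y = X

/-- A core: a demand cut containing exactly one min-core as a subset. -/
def IsCore {V : Type*} [Fintype V] [DecidableEq V] (G : SimpleGraph V) [DecidableRel G.Adj]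
    (T : Finset V) (k : ℕ) (r : V) (X : Finset V) : Prop :=
  IsDemand G T k r X ∧ ∃! Z : Finset V, IsMinCore G T k r Z ∧ Z ⊆ X

/-- The core family C(Z) of a min-core Z: the cores containing Z. -/
def coreFam {V : Type*} [Fintype V] [DecidableEq V] (G : SimpleGraph V) [DecidableRel G.Adj]
    (T : Finset V) (k : ℕ) (r : V) (Z : Finset V) : Set (Finset V) :=
  {X | IsCore G T k r X ∧ Z ⊆ X}

/-- A family F of subsets of V is uncrossable with respect to T. -/
def Uncrossable {V : Type*} [Fintype V] [DecidableEq V] (G : SimpleGraph V)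
    [DecidableRel G.Adj] (T : Finset V) (F : Set (Finset V)) : Prop :=
  (∀ X ∈ F, ∀ Y ∈ F, (X ∩ Y ∈ F ∧ X ∪ Y ∈ F) ∨ (X \ cl G Y ∈ F ∧ Y \ cl G X ∈ F)) ∧
  (∀ X ∈ F, ∀ Y ∈ F, (X ∩ Y ∩ T).Nonempty → X ∩ Y ∈ F ∧ X ∪ Y ∈ F)

/-- `IsMaxCore G T k r Z X` : X is the maximal element of the core family C(Z). -/
def IsMaxCore {V : Type*} [Fintype V] [DecidableEq V] (G : SimpleGraph V)
    [DecidableRel G.Adj] (T : Finset V) (k : ℕ) (r : V) (Z X : Finset V) : Prop :=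
  X ∈ coreFam G T k r Z ∧ ∀ Y ∈ coreFam G T k r Z, X ⊆ Y → Y = X

/-- Two min-cores Z, W with max-cores Z', W' are independent if
W ∩ T ⊄ Γ(Z') and Z ∩ T ⊄ Γ(W'). -/
def IndepCores {V : Type*} [Fintype V] [DecidableEq V] (G : SimpleGraph V)
    [DecidableRel G.Adj] (T : Finset V) (k : ℕ) (r : V) (Z W : Finset V) : Prop :=
  ∀ Z' W' : Finset V, IsMaxCore G T k r Z Z' → IsMaxCore G T k r W W' →
    ¬ (W ∩ T ⊆ nbr G Z') ∧ ¬ (Z ∩ T ⊆ nbr G W')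

section Aux

variable {V : Type*} [Fintype V] [DecidableEq V] (G : SimpleGraph V) [DecidableRel G.Adj]

lemma mem_nbr {X : Finset V} {v : V} :
    v ∈ nbr G X ↔ v ∉ X ∧ ∃ u ∈ X, G.Adj u v := by
  simp [nbr]

lemma mem_cl {X : Finset V} {v : V} :
    v ∈ cl G X ↔ v ∈ X ∨ (v ∉ X ∧ ∃ u ∈ X, G.Adj u v) := by
  simp [cl, mem_nbr]

lemma cl_mono {A B : Finset V} (h : A ⊆ B) : cl G A ⊆ cl G B := by
  intro v hv
  rw [mem_cl] at hv ⊢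
  by_cases hvB : v ∈ B
  · exact Or.inl hvB
  rcases hv with hv | ⟨_, u, hu, hadj⟩
  · exact Or.inl (h hv)
  · exact Or.inr ⟨hvB, u, h hu, hadj⟩

lemma mem_cl_of_adj {B : Finset V} {u v : V} (hv : v ∈ B) (hadj : G.Adj u v) :
    u ∈ cl G B := by
  rw [mem_cl]
  by_cases huB : u ∈ B
  · exact Or.inl huB
  · exact Or.inr ⟨huB, v, hv, hadj.symm⟩

lemma cl_union (X Y : Finset V) : cl G (X ∪ Y) = cl G X ∪ cl G Y := by
  ext v
  simp only [Finset.mem_union, mem_cl]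
  constructor
  · rintro (h | ⟨hn, u, hu, hadj⟩)
    · rcases h with h | h
      · exact Or.inl (Or.inl h)
      · exact Or.inr (Or.inl h)
    rcases hu with hu | hu
    · exact Or.inl (Or.inr ⟨fun h => hn (Or.inl h), u, hu, hadj⟩)
    · exact Or.inr (Or.inr ⟨fun h => hn (Or.inr h), u, hu, hadj⟩)
  · by_cases hv : v ∈ X ∪ Y
    · intro _
      exact Or.inl (Finset.mem_union.mp hv)
    have hv' : ¬ (v ∈ X ∨ v ∈ Y) := fun h => hv (Finset.mem_union.mpr h)
    rintro ((h | ⟨_, u, hu, hadj⟩) | (h | ⟨_, u, hu, hadj⟩))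
    · exact absurd (Or.inl h) hv'
    · exact Or.inr ⟨hv', u, Or.inl hu, hadj⟩
    · exact absurd (Or.inr h) hv'
    · exact Or.inr ⟨hv', u, Or.inr hu, hadj⟩

/-- Submodularity inclusion (union part, for `A ∩ B`). -/
lemma nbr_inter_subset_union (A B : Finset V) :
    nbr G (A ∩ B) ⊆ nbr G A ∪ nbr G B := by
  intro v hv
  rw [mem_nbr] at hv
  obtain ⟨hvn, u, hu, hadj⟩ := hv
  rw [Finset.mem_inter] at hu
  rw [Finset.mem_union, mem_nbr, mem_nbr]
  by_cases hvA : v ∈ A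
  · have hvB : v ∉ B := fun h => hvn (Finset.mem_inter.mpr ⟨hvA, h⟩)
    exact Or.inr ⟨hvB, u, hu.2, hadj⟩
  · exact Or.inl ⟨hvA, u, hu.1, hadj⟩

/-- Submodularity inclusion (union part, for `A ∪ B`). -/
lemma nbr_union_subset_union (A B : Finset V) :
    nbr G (A ∪ B) ⊆ nbr G A ∪ nbr G B := by
  intro v hv
  rw [mem_nbr] at hv
  obtain ⟨hvn, u, hu, hadj⟩ := hv
  rw [Finset.mem_union] at hu
  have hvA : v ∉ A := fun h => hvn (Finset.mem_union_left _ h)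
  have hvB : v ∉ B := fun h => hvn (Finset.mem_union_right _ h)
  rw [Finset.mem_union, mem_nbr, mem_nbr]
  rcases hu with hu | hu
  · exact Or.inl ⟨hvA, u, hu, hadj⟩
  · exact Or.inr ⟨hvB, u, hu, hadj⟩

/-- Submodularity inclusion (intersection part). -/
lemma nbr_inter_inter_subset (A B : Finset V) :
    nbr G (A ∩ B) ∩ nbr G (A ∪ B) ⊆ nbr G A ∩ nbr G B := by
  intro v hv
  rw [Finset.mem_inter, mem_nbr, mem_nbr] at hv
  obtain ⟨⟨_, u, hu, hadj⟩, hvn, _⟩ := hv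
  rw [Finset.mem_inter] at hu
  have hvA : v ∉ A := fun h => hvn (Finset.mem_union_left _ h)
  have hvB : v ∉ B := fun h => hvn (Finset.mem_union_right _ h)
  rw [Finset.mem_inter, mem_nbr, mem_nbr]
  exact ⟨⟨hvA, u, hu.1, hadj⟩, ⟨hvB, u, hu.2, hadj⟩⟩

/-- Posimodularity inclusion (union part). -/
lemma nbr_diff_subset_union (A B : Finset V) :
    nbr G (A \ cl G B) ⊆ nbr G A ∪ nbr G B := by
  intro v hv
  rw [mem_nbr] at hv
  obtain ⟨hvn, u, hu, hadj⟩ := hv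
  rw [Finset.mem_sdiff] at hu
  rw [Finset.mem_union, mem_nbr, mem_nbr]
  by_cases hvA : v ∈ A
  · have hvcl : v ∈ cl G B := by
      by_contra hvcl
      exact hvn (Finset.mem_sdiff.mpr ⟨hvA, hvcl⟩)
    have hvB : v ∉ B := fun h => hu.2 (mem_cl_of_adj G h hadj)
    rw [mem_cl] at hvcl
    rcases hvcl with hvB' | ⟨_, w, hw, hadj'⟩
    · exact absurd hvB' hvB
    · exact Or.inr ⟨hvB, w, hw, hadj'⟩
  · exact Or.inl ⟨hvA, u, hu.1, hadj⟩

/-- Posimodularity inclusion (intersection part). -/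
lemma nbr_diff_inter_subset (A B : Finset V) :
    nbr G (A \ cl G B) ∩ nbr G (B \ cl G A) ⊆ nbr G A ∩ nbr G B := by
  intro v hv
  rw [Finset.mem_inter, mem_nbr, mem_nbr] at hv
  obtain ⟨⟨_, u, hu, hadju⟩, _, w, hw, hadjw⟩ := hv
  rw [Finset.mem_sdiff] at hu hw
  have hvA : v ∉ A := fun h => hw.2 (mem_cl_of_adj G h hadjw)
  have hvB : v ∉ B := fun h => hu.2 (mem_cl_of_adj G h hadju)
  rw [Finset.mem_inter, mem_nbr, mem_nbr]
  exact ⟨⟨hvA, u, hu.1, hadju⟩, ⟨hvB, w, hw.1, hadjw⟩⟩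

/-- Counting helper. -/
lemma card_helper {P Q S R : Finset V} (h1 : P ∪ Q ⊆ S ∪ R) (h2 : P ∩ Q ⊆ S ∩ R) :
    P.card + Q.card ≤ S.card + R.card := by
  have e1 := Finset.card_union_add_card_inter P Q
  have e2 := Finset.card_union_add_card_inter S R
  have l1 := Finset.card_le_card h1
  have l2 := Finset.card_le_card h2
  omega

lemma card_helper_T (T : Finset V) {P Q S R : Finset V}
    (hP : P ⊆ S ∪ R) (hQ : Q ⊆ S ∪ R) (h2 : P ∩ Q ⊆ S ∩ R) :
    (P ∩ T).card + (Q ∩ T).card ≤ (S ∩ T).card + (R ∩ T).card := by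
  apply card_helper
  · intro v hv
    rw [Finset.mem_union, Finset.mem_inter, Finset.mem_inter] at hv
    rw [Finset.mem_union, Finset.mem_inter, Finset.mem_inter]
    rcases hv with ⟨hp, ht⟩ | ⟨hq, ht⟩
    · rcases Finset.mem_union.mp (hP hp) with h | h
      · exact Or.inl ⟨h, ht⟩
      · exact Or.inr ⟨h, ht⟩
    · rcases Finset.mem_union.mp (hQ hq) with h | h
      · exact Or.inl ⟨h, ht⟩
      · exact Or.inr ⟨h, ht⟩
  · intro v hv
    simp only [Finset.mem_inter] at hv ⊢
    have := h2 (Finset.mem_inter.mpr ⟨hv.1.1, hv.2.1⟩)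
    rw [Finset.mem_inter] at this
    exact ⟨⟨this.1, hv.1.2⟩, this.2, hv.1.2⟩

variable (T : Finset V) (k : ℕ) (r : V)

/-- Uncrossing demand cuts that cross in a terminal. -/
lemma demand_inter_union
    (hTconn : ∀ Z : Finset V, (Z ∩ T).Nonempty → (T \ cl G Z).Nonempty →
      k - 1 ≤ (nbr G Z ∩ T).card)
    (hr : r ∈ T) {X Y : Finset V}
    (hX : IsDemand G T k r X) (hY : IsDemand G T k r Y)
    (hne : (X ∩ Y ∩ T).Nonempty) :
    IsDemand G T k r (X ∩ Y) ∧ IsDemand G T k r (X ∪ Y) := by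
  obtain ⟨hX1, hX2, hX3, hX4⟩ := hX
  obtain ⟨hY1, hY2, hY3, hY4⟩ := hY
  have hrI : r ∉ cl G (X ∩ Y) := fun h => hX3 (cl_mono G Finset.inter_subset_left h)
  have hrU : r ∉ cl G (X ∪ Y) := by
    rw [cl_union, Finset.mem_union]
    rintro (h | h)
    · exact hX3 h
    · exact hY3 h
  have hIT : ((X ∩ Y) ∩ T).Nonempty := hne
  have hIr : (T \ cl G (X ∩ Y)).Nonempty := ⟨r, Finset.mem_sdiff.mpr ⟨hr, hrI⟩⟩
  have hUT : ((X ∪ Y) ∩ T).Nonempty := by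
    obtain ⟨x, hx⟩ := hX1
    rw [Finset.mem_inter] at hx
    exact ⟨x, Finset.mem_inter.mpr ⟨Finset.mem_union_left _ hx.1, hx.2⟩⟩
  have hUr : (T \ cl G (X ∪ Y)).Nonempty := ⟨r, Finset.mem_sdiff.mpr ⟨hr, hrU⟩⟩
  have hsub : (nbr G (X ∩ Y) ∩ T).card + (nbr G (X ∪ Y) ∩ T).card ≤
      (nbr G X ∩ T).card + (nbr G Y ∩ T).card :=
    card_helper_T T (nbr_inter_subset_union G X Y) (nbr_union_subset_union G X Y)
      (nbr_inter_inter_subset G X Y)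
  have h1 := hTconn (X ∩ Y) hIT hIr
  have h2 := hTconn (X ∪ Y) hUT hUr
  refine ⟨⟨hIT, hIr, hrI, ?_⟩, ⟨hUT, hUr, hrU, ?_⟩⟩ <;> omega

/-- Uncrossing demand cuts via the difference operation. -/
lemma demand_diff
    (hTconn : ∀ Z : Finset V, (Z ∩ T).Nonempty → (T \ cl G Z).Nonempty →
      k - 1 ≤ (nbr G Z ∩ T).card)
    (hr : r ∈ T) {X Y : Finset V}
    (hX : IsDemand G T k r X) (hY : IsDemand G T k r Y)
    (hA : ((X \ cl G Y) ∩ T).Nonempty) (hB : ((Y \ cl G X) ∩ T).Nonempty) :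
    IsDemand G T k r (X \ cl G Y) ∧ IsDemand G T k r (Y \ cl G X) := by
  obtain ⟨hX1, hX2, hX3, hX4⟩ := hX
  obtain ⟨hY1, hY2, hY3, hY4⟩ := hY
  have hrA : r ∉ cl G (X \ cl G Y) := fun h => hX3 (cl_mono G (Finset.sdiff_subset) h)
  have hrB : r ∉ cl G (Y \ cl G X) := fun h => hY3 (cl_mono G (Finset.sdiff_subset) h)
  have hAr : (T \ cl G (X \ cl G Y)).Nonempty := ⟨r, Finset.mem_sdiff.mpr ⟨hr, hrA⟩⟩
  have hBr : (T \ cl G (Y \ cl G X)).Nonempty := ⟨r, Finset.mem_sdiff.mpr ⟨hr, hrB⟩⟩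
  have hsub : (nbr G (X \ cl G Y) ∩ T).card + (nbr G (Y \ cl G X) ∩ T).card ≤
      (nbr G X ∩ T).card + (nbr G Y ∩ T).card := by
    apply card_helper_T T (nbr_diff_subset_union G X Y)
    · have := nbr_diff_subset_union G Y X
      intro v hv
      rcases Finset.mem_union.mp (this hv) with h | h
      · exact Finset.mem_union_right _ h
      · exact Finset.mem_union_left _ h
    · exact nbr_diff_inter_subset G X Y
  have h1 := hTconn (X \ cl G Y) hA hAr
  have h2 := hTconn (Y \ cl G X) hB hBr
  refine ⟨⟨hA, hAr, hrA, ?_⟩, ⟨hB, hBr, hrB, ?_⟩⟩ <;> omega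

/-- Every demand cut contains a min-core. -/
lemma exists_minCore :
    ∀ X : Finset V, IsDemand G T k r X → ∃ Z, IsMinCore G T k r Z ∧ Z ⊆ X := by
  intro X
  induction X using Finset.strongInduction with
  | _ X ih =>
    intro hX
    by_cases h : ∀ Y : Finset V, IsDemand G T k r Y → Y ⊆ X → Y = X
    · exact ⟨X, ⟨hX, h⟩, subset_rfl⟩
    · push_neg at h
      obtain ⟨Y, hY, hYX, hne⟩ := h
      obtain ⟨Z, hZ, hZY⟩ := ih Y (ssubset_of_subset_of_ne hYX hne) hY
      exact ⟨Z, hZ, hZY.trans hYX⟩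

/-- A min-core that meets a demand cut in a terminal is contained in it. -/
lemma minCore_subset_of_meet
    (hTconn : ∀ Z : Finset V, (Z ∩ T).Nonempty → (T \ cl G Z).Nonempty →
      k - 1 ≤ (nbr G Z ∩ T).card)
    (hr : r ∈ T) {Z X : Finset V}
    (hZ : IsMinCore G T k r Z) (hX : IsDemand G T k r X)
    (hne : (Z ∩ X ∩ T).Nonempty) : Z ⊆ X := by
  have h := (demand_inter_union G T k r hTconn hr hZ.1 hX hne).1
  have := hZ.2 (Z ∩ X) h Finset.inter_subset_left
  intro v hv
  rw [← this] at hv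
  exact (Finset.mem_inter.mp hv).2

/-- Existence of a max-core above a given element of the core family. -/
lemma exists_maxCore {Z X : Finset V} (hX : X ∈ coreFam G T k r Z) :
    ∃ M, IsMaxCore G T k r Z M ∧ X ⊆ M := by
  classical
  set S : Set (Finset V) := {U | U ∈ coreFam G T k r Z ∧ X ⊆ U} with hS
  have hfin : S.Finite := Set.toFinite S
  have hne : S.Nonempty := ⟨X, hX, subset_rfl⟩
  obtain ⟨M, hM, hmax⟩ : ∃ M ∈ S, ∀ M' ∈ S, id M ≤ id M' → id M = id M' := by
    obtain ⟨M, hM⟩ := hfin.exists_maximal hne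
    exact ⟨M, hM.1, fun M' hM' h => le_antisymm h (hM.2 hM' h)⟩
  refine ⟨M, ⟨hM.1, ?_⟩, hM.2⟩
  intro Y hY hMY
  exact (hmax Y ⟨hY, hM.2.trans hMY⟩ hMY).symm

end Aux

theorem stmt_12 {V : Type*} [Fintype V] [DecidableEq V]
    (G : SimpleGraph V) [DecidableRel G.Adj] (k : ℕ) (hk : 1 ≤ k)
    (T : Finset V)
    -- |Γ_T(Z)| ≥ k-1 for every Steiner T-cut Z
    (hTconn : ∀ Z : Finset V, (Z ∩ T).Nonempty → (T \ cl G Z).Nonempty →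
      k - 1 ≤ (nbr G Z ∩ T).card)
    (r : V) (hr : r ∈ T)
    (M' : Set (Finset V)) (hM' : ∀ Z ∈ M', IsMinCore G T k r Z)
    (hind : ∀ Z ∈ M', ∀ W ∈ M', Z ≠ W → IndepCores G T k r Z W) :
    Uncrossable G T (⋃ Z ∈ M', coreFam G T k r Z) := by
  classical
  set F : Set (Finset V) := ⋃ Z ∈ M', coreFam G T k r Z with hF
  have memF : ∀ {X : Finset V}, X ∈ F ↔ ∃ Z ∈ M', X ∈ coreFam G T k r Z := by
    intro X
    simp [hF]
  -- Key claim 1: uncrossing within a terminal.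
  have keyA : ∀ X ∈ F, ∀ Y ∈ F, (X ∩ Y ∩ T).Nonempty → X ∩ Y ∈ F ∧ X ∪ Y ∈ F := by
    intro X hXF Y hYF hne
    obtain ⟨Z, hZM, hXZ⟩ := memF.mp hXF
    obtain ⟨hXcore, hZX⟩ := hXZ
    obtain ⟨W, hWM, hYW⟩ := memF.mp hYF
    obtain ⟨hYcore, hWY⟩ := hYW
    have hZmin := hM' Z hZM
    have hWmin := hM' W hWM
    have hIU := demand_inter_union G T k r hTconn hr hXcore.1 hYcore.1 hne
    -- the unique min-core in X is Z, in Y is W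
    have huniqX : ∀ Z₀, IsMinCore G T k r Z₀ → Z₀ ⊆ X → Z₀ = Z := by
      intro Z₀ h1 h2
      obtain ⟨Zc, _, hu⟩ := hXcore.2
      rw [hu Z₀ ⟨h1, h2⟩, hu Z ⟨hZmin, hZX⟩]
    have huniqY : ∀ Z₀, IsMinCore G T k r Z₀ → Z₀ ⊆ Y → Z₀ = W := by
      intro Z₀ h1 h2
      obtain ⟨Wc, _, hu⟩ := hYcore.2
      rw [hu Z₀ ⟨h1, h2⟩, hu W ⟨hWmin, hWY⟩]
    -- Z = W
    obtain ⟨Z₀, hZ₀min, hZ₀sub⟩ := exists_minCore G T k r (X ∩ Y) hIU.1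
    have hZW : Z = W := by
      rw [← huniqX Z₀ hZ₀min (hZ₀sub.trans Finset.inter_subset_left),
        ← huniqY Z₀ hZ₀min (hZ₀sub.trans Finset.inter_subset_right)]
    constructor
    · refine memF.mpr ⟨Z, hZM, ⟨hIU.1, ⟨Z, ⟨hZmin, ?_⟩, ?_⟩⟩, ?_⟩
      · exact Finset.subset_inter hZX (hZW ▸ hWY)
      · intro Z₁ h1
        exact huniqX Z₁ h1.1 (h1.2.trans Finset.inter_subset_left)
      · exact Finset.subset_inter hZX (hZW ▸ hWY)
    · refine memF.mpr ⟨Z, hZM, ⟨hIU.2, ⟨Z, ⟨hZmin, ?_⟩, ?_⟩⟩, ?_⟩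
      · exact hZX.trans Finset.subset_union_left
      · intro Z₁ h1
        obtain ⟨h1min, h1sub⟩ := h1
        obtain ⟨t, ht⟩ := h1min.1.1
        rw [Finset.mem_inter] at ht
        rcases Finset.mem_union.mp (h1sub ht.1) with htX | htY
        · exact huniqX Z₁ h1min (minCore_subset_of_meet G T k r hTconn hr h1min hXcore.1
            ⟨t, Finset.mem_inter.mpr ⟨Finset.mem_inter.mpr ⟨ht.1, htX⟩, ht.2⟩⟩)
        · rw [hZW]
          exact huniqY Z₁ h1min (minCore_subset_of_meet G T k r hTconn hr h1min hYcore.1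
            ⟨t, Finset.mem_inter.mpr ⟨Finset.mem_inter.mpr ⟨ht.1, htY⟩, ht.2⟩⟩)
      · exact hZX.trans Finset.subset_union_left
  -- Key claim 2: uncrossing by differences when not meeting in a terminal.
  have keyB : ∀ X ∈ F, ∀ Y ∈ F, (X ∩ Y ∩ T) = ∅ →
      X \ cl G Y ∈ F ∧ Y \ cl G X ∈ F := by
    intro X hXF Y hYF hemp
    obtain ⟨Z, hZM, hXZ⟩ := memF.mp hXF
    obtain ⟨hXcore, hZX⟩ := hXZ
    obtain ⟨W, hWM, hYW⟩ := memF.mp hYF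
    obtain ⟨hYcore, hWY⟩ := hYW
    have hZmin := hM' Z hZM
    have hWmin := hM' W hWM
    have huniqX : ∀ Z₀, IsMinCore G T k r Z₀ → Z₀ ⊆ X → Z₀ = Z := by
      intro Z₀ h1 h2
      obtain ⟨Zc, _, hu⟩ := hXcore.2
      rw [hu Z₀ ⟨h1, h2⟩, hu Z ⟨hZmin, hZX⟩]
    have huniqY : ∀ Z₀, IsMinCore G T k r Z₀ → Z₀ ⊆ Y → Z₀ = W := by
      intro Z₀ h1 h2
      obtain ⟨Wc, _, hu⟩ := hYcore.2
      rw [hu Z₀ ⟨h1, h2⟩, hu W ⟨hWmin, hWY⟩]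
    -- Z ≠ W since Z ⊆ X, and if Z = W then Z ⊆ X ∩ Y meets T
    have hZW : Z ≠ W := by
      intro h
      obtain ⟨t, ht⟩ := hZmin.1.1
      rw [Finset.mem_inter] at ht
      have : t ∈ X ∩ Y ∩ T :=
        Finset.mem_inter.mpr ⟨Finset.mem_inter.mpr ⟨hZX ht.1, hWY (h ▸ ht.1)⟩, ht.2⟩
      rw [hemp] at this
      exact absurd this (Finset.notMem_empty t)
    -- max-cores above X and Y
    obtain ⟨Z', hZ'max, hXZ'⟩ := exists_maxCore G T k r (show X ∈ coreFam G T k r Z from ⟨hXcore, hZX⟩)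
    obtain ⟨W', hW'max, hYW'⟩ := exists_maxCore G T k r (show Y ∈ coreFam G T k r W from ⟨hYcore, hWY⟩)
    obtain ⟨hindWZ, hindZW⟩ := hind Z hZM W hWM hZW Z' W' hZ'max hW'max
    -- uniqueness of min-core inside the max-cores
    have huniqZ' : ∀ Z₀, IsMinCore G T k r Z₀ → Z₀ ⊆ Z' → Z₀ = Z := by
      intro Z₀ h1 h2
      obtain ⟨Zc, _, hu⟩ := hZ'max.1.1.2
      rw [hu Z₀ ⟨h1, h2⟩, hu Z ⟨hZmin, hZ'max.1.2⟩]
    have huniqW' : ∀ Z₀, IsMinCore G T k r Z₀ → Z₀ ⊆ W' → Z₀ = W := by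
      intro Z₀ h1 h2
      obtain ⟨Wc, _, hu⟩ := hW'max.1.1.2
      rw [hu Z₀ ⟨h1, h2⟩, hu W ⟨hWmin, hW'max.1.2⟩]
    -- (X \ cl Y) ∩ T nonempty
    have hA : ((X \ cl G Y) ∩ T).Nonempty := by
      rw [Finset.nonempty_iff_ne_empty]
      intro hcontra
      apply hindZW
      intro v hv
      rw [Finset.mem_inter] at hv
      have hvX : v ∈ X := hZX hv.1
      have hvcl : v ∈ cl G Y := by
        by_contra hvcl
        have : v ∈ (X \ cl G Y) ∩ T :=
          Finset.mem_inter.mpr ⟨Finset.mem_sdiff.mpr ⟨hvX, hvcl⟩, hv.2⟩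
        rw [hcontra] at this
        exact absurd this (Finset.notMem_empty v)
      have hvclW' : v ∈ cl G W' := cl_mono G hYW' hvcl
      rw [cl] at hvclW'
      rcases Finset.mem_union.mp hvclW' with hvW' | hvnbr
      · exfalso
        -- v ∈ Z ∩ W' ∩ T, so Z ⊆ W', so Z = W
        have hsub : Z ⊆ W' := minCore_subset_of_meet G T k r hTconn hr hZmin hW'max.1.1.1
          ⟨v, Finset.mem_inter.mpr ⟨Finset.mem_inter.mpr ⟨hv.1, hvW'⟩, hv.2⟩⟩
        exact hZW (huniqW' Z hZmin hsub)
      · exact hvnbr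
    have hB : ((Y \ cl G X) ∩ T).Nonempty := by
      rw [Finset.nonempty_iff_ne_empty]
      intro hcontra
      apply hindWZ
      intro v hv
      rw [Finset.mem_inter] at hv
      have hvY : v ∈ Y := hWY hv.1
      have hvcl : v ∈ cl G X := by
        by_contra hvcl
        have : v ∈ (Y \ cl G X) ∩ T :=
          Finset.mem_inter.mpr ⟨Finset.mem_sdiff.mpr ⟨hvY, hvcl⟩, hv.2⟩
        rw [hcontra] at this
        exact absurd this (Finset.notMem_empty v)
      have hvclZ' : v ∈ cl G Z' := cl_mono G hXZ' hvcl
      rw [cl] at hvclZ'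
      rcases Finset.mem_union.mp hvclZ' with hvZ' | hvnbr
      · exfalso
        have hsub : W ⊆ Z' := minCore_subset_of_meet G T k r hTconn hr hWmin hZ'max.1.1.1
          ⟨v, Finset.mem_inter.mpr ⟨Finset.mem_inter.mpr ⟨hv.1, hvZ'⟩, hv.2⟩⟩
        exact hZW (huniqZ' W hWmin hsub).symm
      · exact hvnbr
    have hdiff := demand_diff G T k r hTconn hr hXcore.1 hYcore.1 hA hB
    constructor
    · obtain ⟨Z₀, hZ₀min, hZ₀sub⟩ := exists_minCore G T k r (X \ cl G Y) hdiff.1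
      have hZ₀Z : Z₀ = Z := huniqX Z₀ hZ₀min (hZ₀sub.trans Finset.sdiff_subset)
      refine memF.mpr ⟨Z, hZM, ⟨hdiff.1, ⟨Z, ⟨hZmin, hZ₀Z ▸ hZ₀sub⟩, ?_⟩⟩, hZ₀Z ▸ hZ₀sub⟩
      intro Z₁ h1
      exact huniqX Z₁ h1.1 (h1.2.trans Finset.sdiff_subset)
    · obtain ⟨W₀, hW₀min, hW₀sub⟩ := exists_minCore G T k r (Y \ cl G X) hdiff.2
      have hW₀W : W₀ = W := huniqY W₀ hW₀min (hW₀sub.trans Finset.sdiff_subset)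
      refine memF.mpr ⟨W, hWM, ⟨hdiff.2, ⟨W, ⟨hWmin, hW₀W ▸ hW₀sub⟩, ?_⟩⟩, hW₀W ▸ hW₀sub⟩
      intro W₁ h1
      exact huniqY W₁ h1.1 (h1.2.trans Finset.sdiff_subset)
  constructor
  · intro X hXF Y hYF
    by_cases hne : (X ∩ Y ∩ T).Nonempty
    · exact Or.inl (keyA X hXF Y hYF hne)
    · rw [Finset.not_nonempty_iff_eq_empty] at hne
      exact Or.inr (keyB X hXF Y hYF hne)
  · exact keyA
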